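/- Let At be a finite set of propositional atoms and let Δ be a consistent finite knowledge base of conditionals over At. Let AF be the ≺^Δ_Z-induced argumentation framework of Δ, whose arguments are the propositional interpretations Ω of At and where ω1 attacks ω2 if and only if ω1 ≺^Δ_Z ω2. Then the System Z ranking function κ^z_Δ coincides with the grounded-stratified labeling S^gr_AF of AF, i.e., κ^z_Δ(ω) = S^gr_AF(ω) for every ω ∈ Ω. -/

import Mathlib

/-- Labels for arguments: in, out, undecided. -/
inductive Lab : Type where
  | argIn | argOut | argUndec
  deriving DecidableEq

/-- The set of arguments in `C` labeled `in` by `L`. -/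
def inSet {α : Type*} (C : Set α) (L : α → Lab) : Set α := {a ∈ C | L a = Lab.argIn}

/-- The set of arguments in `C` labeled `undec` by `L`. -/
def undecSet {α : Type*} (C : Set α) (L : α → Lab) : Set α := {a ∈ C | L a = Lab.argUndec}

/-- `L` is a complete labeling of the subframework of `att` on the set `C` of arguments. -/
def IsCompleteLab {α : Type*} (att : α → α → Prop) (C : Set α) (L : α → Lab) : Prop :=
  (∀ a ∈ C, L a = Lab.argOut → ∃ b ∈ C, L b = Lab.argIn ∧ att b a) ∧
  (∀ a ∈ C, L a = Lab.argIn → ∀ b ∈ C, att b a → L b = Lab.argOut) ∧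
  (∀ a ∈ C, L a = Lab.argUndec →
    (∀ b ∈ C, att b a → L b ≠ Lab.argIn) ∧ (∃ b ∈ C, att b a ∧ L b ≠ Lab.argOut))

/-- The five semantics considered. -/
inductive Sem : Type where
  | complete | grounded | preferred | stable | semiStable

/-- `SemLab σ att C L` : `L` is a `σ`-labeling of the subframework of `att` on `C`. -/
def SemLab {α : Type*} : Sem → (α → α → Prop) → Set α → (α → Lab) → Prop
  | Sem.complete, att, C, L => IsCompleteLab att C L
  | Sem.grounded, att, C, L => IsCompleteLab att C L ∧
      ∀ L', IsCompleteLab att C L' → inSet C L' ⊆ inSet C L → inSet C L ⊆ inSet C L'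
  | Sem.preferred, att, C, L => IsCompleteLab att C L ∧
      ∀ L', IsCompleteLab att C L' → inSet C L ⊆ inSet C L' → inSet C L' ⊆ inSet C L
  | Sem.stable, att, C, L => IsCompleteLab att C L ∧ undecSet C L = ∅
  | Sem.semiStable, att, C, L => IsCompleteLab att C L ∧
      ∀ L', IsCompleteLab att C L' → undecSet C L' ⊆ undecSet C L → undecSet C L ⊆ undecSet C L'

/-- `Stratified σ att C S` : `S` is a `σ`-stratified labeling of the subframework of `att`
on the set `C` of arguments (values of `S` outside `C` are irrelevant). -/
inductive Stratified {α : Type*} (σ : Sem) (att : α → α → Prop) : Set α → (α → ℕ∞) → Prop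
  | ofEmpty {C : Set α} {S : α → ℕ∞} (L : α → Lab)
      (hL : SemLab σ att C L) (hin : inSet C L = ∅)
      (hS : ∀ a ∈ C, S a = ⊤) : Stratified σ att C S
  | ofStep {C : Set α} {S : α → ℕ∞} (L : α → Lab) (S' : α → ℕ∞)
      (hL : SemLab σ att C L) (hin : (inSet C L).Nonempty)
      (hS' : Stratified σ att (C \ inSet C L) S')
      (h0 : ∀ a ∈ inSet C L, S a = 0)
      (h1 : ∀ a ∈ C \ inSet C L, S a = 1 + S' a) :
      Stratified σ att C S

/-- Propositional formulas over a set of atoms. -/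
inductive PropForm (At : Type) : Type where
  | atom : At → PropForm At
  | fls : PropForm At
  | neg : PropForm At → PropForm At
  | conj : PropForm At → PropForm At → PropForm At
  | disj : PropForm At → PropForm At → PropForm At
  deriving DecidableEq

/-- Evaluation of a propositional formula in an interpretation `ω : At → Bool`. -/
def PropForm.eval {At : Type} (ω : At → Bool) : PropForm At → Bool
  | PropForm.atom a => ω a
  | PropForm.fls => false
  | PropForm.neg φ => !(φ.eval ω)
  | PropForm.conj φ ψ => φ.eval ω && ψ.eval ω
  | PropForm.disj φ ψ => φ.eval ω || ψ.eval ω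

/-- A conditional `(φ|ψ)` with conclusion `φ = conc` and premise `ψ = prem`. -/
structure Cond (At : Type) : Type where
  conc : PropForm At
  prem : PropForm At
  deriving DecidableEq

/-- `ω` verifies `(φ|ψ)` iff `ω ⊨ φ ∧ ψ`. -/
def Verifies {At : Type} (ω : At → Bool) (δ : Cond At) : Prop :=
  δ.conc.eval ω = true ∧ δ.prem.eval ω = true

/-- `ω` falsifies `(φ|ψ)` iff `ω ⊨ ¬φ ∧ ψ`. -/
def Falsifies {At : Type} (ω : At → Bool) (δ : Cond At) : Prop :=
  δ.conc.eval ω = false ∧ δ.prem.eval ω = true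

/-- `ω` satisfies the knowledge base `Δ` iff it satisfies (does not falsify) every
conditional in `Δ`. -/
def SatKB {At : Type} (ω : At → Bool) (Δ : Finset (Cond At)) : Prop :=
  ∀ δ ∈ Δ, ¬ Falsifies ω δ

/-- A ranking function `κ` accepts `(φ|ψ)` iff `κ(φ ∧ ψ) < κ(¬φ ∧ ψ)`, where
`κ` of a formula is the minimum of `κ` over its models (`∞` if there are none). -/
def Accepts {At : Type} (κ : (At → Bool) → ℕ∞) (δ : Cond At) : Prop :=
  (⨅ (ω : At → Bool) (_ : Verifies ω δ), κ ω) <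
    ⨅ (ω : At → Bool) (_ : Falsifies ω δ), κ ω

/-- `Δ` is consistent iff some ranking function (a map to `ℕ ∪ {∞}` attaining `0`)
accepts every conditional in `Δ`. -/
def ConsistentKB {At : Type} (Δ : Finset (Cond At)) : Prop :=
  ∃ κ : (At → Bool) → ℕ∞, (∃ ω : At → Bool, κ ω = 0) ∧ ∀ δ ∈ Δ, Accepts κ δ

/-- `δ` is tolerated by `Δ` iff some interpretation verifies `δ` and satisfies `Δ`. -/
def Tolerated {At : Type} (Δ : Finset (Cond At)) (δ : Cond At) : Prop :=
  ∃ ω : At → Bool, Verifies ω δ ∧ ∀ δ' ∈ Δ, ¬ Falsifies ω δ'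

open Classical in
/-- The rest of `Δ` after `n` rounds of the Z-partitioning: `ZRest Δ n` is
`Δ \ (Δ₀ ∪ … ∪ Δₙ₋₁)`, so the `i`-th Z-partition class is
`Δᵢ = {δ ∈ ZRest Δ i | δ tolerated by ZRest Δ i} = ZRest Δ i \ ZRest Δ (i+1)`. -/
noncomputable def ZRest {At : Type} (Δ : Finset (Cond At)) : ℕ → Finset (Cond At)
  | 0 => Δ
  | n + 1 => (ZRest Δ n).filter (fun δ => ¬ Tolerated (ZRest Δ n) δ)

/-- The Z-rank `Z_Δ(δ)`: the index `i` of the Z-partition class `Δᵢ` containing `δ`,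
i.e., the largest `i` with `δ ∈ ZRest Δ i` (for consistent `Δ`). -/
noncomputable def Zrank {At : Type} (Δ : Finset (Cond At)) (δ : Cond At) : ℕ :=
  sSup {i : ℕ | δ ∈ ZRest Δ i}

open Classical in
/-- `max {Z_Δ(δ) | ω falsifies δ, δ ∈ Δ}`, with value `⊥` for the empty set. -/
noncomputable def maxFal {At : Type} (Δ : Finset (Cond At)) (ω : At → Bool) : WithBot ℕ :=
  (Δ.filter (fun δ => Falsifies ω δ)).sup (fun δ => (Zrank Δ δ : WithBot ℕ))

open Classical in
/-- The System Z ranking function: `κ^z_Δ(ω) = 0` if `ω` satisfies `Δ`, and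
`κ^z_Δ(ω) = max {Z_Δ(δ) | ω falsifies δ} + 1` otherwise. -/
noncomputable def kappaZ {At : Type} (Δ : Finset (Cond At)) (ω : At → Bool) : ℕ∞ :=
  if SatKB ω Δ then 0
  else (((Δ.filter (fun δ => Falsifies ω δ)).sup (Zrank Δ) : ℕ) : ℕ∞) + 1

/-- The preference relation `ω₁ ≺^Δ_Z ω₂`: either `ω₁` satisfies `Δ` and `ω₂` does not,
or `max {Z_Δ(δ) | ω₁ falsifies δ} < max {Z_Δ(δ) | ω₂ falsifies δ}`. -/
def precZ {At : Type} (Δ : Finset (Cond At)) (ω₁ ω₂ : At → Bool) : Prop :=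
  (SatKB ω₁ Δ ∧ ¬ SatKB ω₂ Δ) ∨ maxFal Δ ω₁ < maxFal Δ ω₂
section AuxLemmas

open Classical

set_option linter.unusedSectionVars false

variable {At : Type} [DecidableEq At] [Fintype At]

/-- The set of conditionals of `Δ` falsified by `ω`. -/
noncomputable def falSet (Δ : Finset (Cond At)) (ω : At → Bool) : Finset (Cond At) :=
  Δ.filter (fun δ => Falsifies ω δ)

lemma kappaZ_def (Δ : Finset (Cond At)) (ω : At → Bool) :
    kappaZ Δ ω = if SatKB ω Δ then 0
      else (((falSet Δ ω).sup (Zrank Δ) : ℕ) : ℕ∞) + 1 := rfl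

lemma maxFal_def (Δ : Finset (Cond At)) (ω : At → Bool) :
    maxFal Δ ω = (falSet Δ ω).sup (fun δ => (Zrank Δ δ : WithBot ℕ)) := rfl

lemma satKB_iff_falSet_empty (Δ : Finset (Cond At)) (ω : At → Bool) :
    SatKB ω Δ ↔ falSet Δ ω = ∅ := by
  simp [SatKB, falSet, Finset.filter_eq_empty_iff]

lemma falSet_nonempty (Δ : Finset (Cond At)) (ω : At → Bool) (h : ¬ SatKB ω Δ) :
    (falSet Δ ω).Nonempty := by
  rw [satKB_iff_falSet_empty] at h
  exact Finset.nonempty_of_ne_empty h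

lemma maxFal_eq_coe (Δ : Finset (Cond At)) (ω : At → Bool) (h : ¬ SatKB ω Δ) :
    maxFal Δ ω = (((falSet Δ ω).sup (Zrank Δ) : ℕ) : WithBot ℕ) := by
  have hne := falSet_nonempty Δ ω h
  have h2 := Finset.coe_sup' hne (Zrank Δ)
  rw [Finset.sup'_eq_sup hne] at h2
  rw [maxFal_def]
  simp only [Nat.cast_withBot, Nat.cast_id]
  rw [h2]
  rfl

lemma maxFal_eq_bot (Δ : Finset (Cond At)) (ω : At → Bool) (h : SatKB ω Δ) :
    maxFal Δ ω = ⊥ := by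
  rw [maxFal_def, (satKB_iff_falSet_empty Δ ω).mp h]
  rfl

lemma kappaZ_eq_zero (Δ : Finset (Cond At)) (ω : At → Bool) (h : SatKB ω Δ) :
    kappaZ Δ ω = 0 := by
  rw [kappaZ_def, if_pos h]

lemma kappaZ_eq_succ (Δ : Finset (Cond At)) (ω : At → Bool) (h : ¬ SatKB ω Δ) :
    kappaZ Δ ω = (((falSet Δ ω).sup (Zrank Δ) : ℕ) : ℕ∞) + 1 := by
  rw [kappaZ_def, if_neg h]

lemma precZ_iff (Δ : Finset (Cond At)) (ω₁ ω₂ : At → Bool) :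
    precZ Δ ω₁ ω₂ ↔ kappaZ Δ ω₁ < kappaZ Δ ω₂ := by
  by_cases h1 : SatKB ω₁ Δ <;> by_cases h2 : SatKB ω₂ Δ
  · simp [precZ, h1, h2, maxFal_eq_bot, kappaZ_eq_zero]
  · have hpos : (0 : ℕ∞) < kappaZ Δ ω₂ := by
      rw [kappaZ_eq_succ Δ ω₂ h2]
      exact lt_of_lt_of_le zero_lt_one le_add_self
    simp [precZ, h1, h2, kappaZ_eq_zero Δ ω₁ h1, hpos]
  · simp only [precZ, maxFal_eq_bot Δ ω₂ h2, kappaZ_eq_zero Δ ω₂ h2]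
    simp [h1, h2]
  · simp only [precZ, h1, h2, false_and, not_true_eq_false, and_false, false_or,
      maxFal_eq_coe Δ _ h1, maxFal_eq_coe Δ _ h2, kappaZ_eq_succ Δ _ h1,
      kappaZ_eq_succ Δ _ h2]
    constructor
    · intro h
      have hk : (falSet Δ ω₁).sup (Zrank Δ) < (falSet Δ ω₂).sup (Zrank Δ) := by
        exact_mod_cast h
      exact_mod_cast Nat.succ_lt_succ hk
    · intro h
      have hk : (falSet Δ ω₁).sup (Zrank Δ) + 1 < (falSet Δ ω₂).sup (Zrank Δ) + 1 := by
        exact_mod_cast h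
      exact_mod_cast Nat.lt_of_succ_lt_succ hk

end AuxLemmas
section AuxLemmas2

open Classical

set_option linter.unusedSectionVars false

variable {At : Type} [DecidableEq At] [Fintype At]

lemma exists_satKB {Δ : Finset (Cond At)} (hcons : ConsistentKB Δ) :
    ∃ ω : At → Bool, SatKB ω Δ := by
  obtain ⟨κ, ⟨ω₀, h0⟩, hacc⟩ := hcons
  refine ⟨ω₀, fun δ hδ hfal => ?_⟩
  have h1 : (⨅ (ω : At → Bool) (_ : Falsifies ω δ), κ ω) ≤ κ ω₀ := by
    refine le_trans (iInf_le _ ω₀) ?_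
    rw [iInf_pos hfal]
  have h2 := hacc δ hδ
  rw [h0] at h1
  exact absurd (lt_of_lt_of_le h2 h1) (by simp)

lemma exists_tolerated {Δ : Finset (Cond At)} (hcons : ConsistentKB Δ)
    (Γ : Finset (Cond At)) (hΓΔ : Γ ⊆ Δ) (hne : Γ.Nonempty) :
    ∃ δ ∈ Γ, Tolerated Γ δ := by
  obtain ⟨κ, -, hacc⟩ := hcons
  set v : Cond At → ℕ∞ := fun δ => ⨅ (ω : At → Bool) (_ : Verifies ω δ), κ ω with hv
  obtain ⟨δ, hδΓ, hmin⟩ := Γ.exists_min_image v hne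
  have hac := hacc δ (hΓΔ hδΓ)
  have hlt : v δ < ⊤ := lt_of_lt_of_le hac le_top
  obtain ⟨ω, hω⟩ := Finite.exists_min (fun ω : At → Bool =>
    ⨅ (_ : Verifies ω δ), κ ω)
  have hveq : (⨅ (_ : Verifies ω δ), κ ω) = v δ :=
    le_antisymm (le_iInf hω)
      (iInf_le (fun ω' => ⨅ (_ : Verifies ω' δ), κ ω') ω)
  have hver : Verifies ω δ := by
    by_contra hc
    rw [iInf_neg hc] at hveq
    rw [← hveq] at hlt
    exact absurd hlt (lt_irrefl _)
  have hκω : κ ω = v δ := by rw [← hveq, iInf_pos hver]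
  refine ⟨δ, hδΓ, ω, hver, fun δ' hδ' hfal => ?_⟩
  have hac' := hacc δ' (hΓΔ hδ')
  have hle : (⨅ (ω' : At → Bool) (_ : Falsifies ω' δ'), κ ω') ≤ κ ω := by
    refine le_trans (iInf_le (fun ω' => ⨅ (_ : Falsifies ω' δ'), κ ω') ω) ?_
    rw [iInf_pos hfal]
  have : v δ' < v δ' :=
    lt_of_lt_of_le hac' (hle.trans (hκω.le.trans (hmin δ' hδ')))
  exact absurd this (lt_irrefl _)

lemma ZRest_subset_self (Δ : Finset (Cond At)) : ∀ n, ZRest Δ n ⊆ Δ := by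
  intro n
  induction n with
  | zero => exact fun x hx => hx
  | succ n ih => exact Finset.Subset.trans (Finset.filter_subset _ _) ih

lemma ZRest_antitone (Δ : Finset (Cond At)) {n m : ℕ} (h : n ≤ m) :
    ZRest Δ m ⊆ ZRest Δ n := by
  induction m with
  | zero => rw [Nat.le_zero.mp h]
  | succ m ih =>
    rcases Nat.lt_or_ge n (m+1) with h' | h'
    · exact Finset.Subset.trans (Finset.filter_subset _ _) (ih (Nat.lt_succ_iff.mp h'))
    · rw [Nat.le_antisymm h h']

lemma ZRest_card {Δ : Finset (Cond At)} (hcons : ConsistentKB Δ) :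
    ∀ n, ZRest Δ n = ∅ ∨ (ZRest Δ n).card + n ≤ Δ.card := by
  intro n
  induction n with
  | zero => right; simp [ZRest]
  | succ n ih =>
    rcases eq_or_ne (ZRest Δ n) ∅ with he | hne
    · left
      show Finset.filter _ _ = ∅
      rw [he]
      simp
    · rcases ih with he | hcard
      · exact absurd he hne
      · right
        obtain ⟨δ, hδ, htol⟩ := exists_tolerated hcons (ZRest Δ n)
          (ZRest_subset_self Δ n) (Finset.nonempty_of_ne_empty hne)
        have hss : ZRest Δ (n+1) ⊂ ZRest Δ n := by
          refine Finset.ssubset_iff_of_subset (Finset.filter_subset _ _) |>.mpr ?_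
          refine ⟨δ, hδ, fun hmem => ?_⟩
          rw [Finset.mem_filter] at hmem
          exact hmem.2 htol
        have := Finset.card_lt_card hss
        omega

lemma ZRest_empty {Δ : Finset (Cond At)} (hcons : ConsistentKB Δ) :
    ZRest Δ (Δ.card + 1) = ∅ := by
  rcases ZRest_card hcons (Δ.card + 1) with h | h
  · exact h
  · omega

lemma mem_ZRest_bdd {Δ : Finset (Cond At)} (hcons : ConsistentKB Δ)
    {δ : Cond At} {i : ℕ} (h : δ ∈ ZRest Δ i) : i ≤ Δ.card := by
  by_contra hc
  have : δ ∈ ZRest Δ (Δ.card + 1) := ZRest_antitone Δ (by omega) h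
  rw [ZRest_empty hcons] at this
  exact absurd this (Finset.notMem_empty δ)

lemma Zrank_mem {Δ : Finset (Cond At)} (hcons : ConsistentKB Δ)
    {δ : Cond At} (hδ : δ ∈ Δ) : δ ∈ ZRest Δ (Zrank Δ δ) := by
  have hne : ({i : ℕ | δ ∈ ZRest Δ i}).Nonempty := ⟨0, hδ⟩
  have hbdd : BddAbove {i : ℕ | δ ∈ ZRest Δ i} :=
    ⟨Δ.card, fun i hi => mem_ZRest_bdd hcons hi⟩
  exact Nat.sSup_mem hne hbdd

lemma le_Zrank {Δ : Finset (Cond At)} (hcons : ConsistentKB Δ)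
    {δ : Cond At} {i : ℕ} (h : δ ∈ ZRest Δ i) : i ≤ Zrank Δ δ := by
  have hbdd : BddAbove {i : ℕ | δ ∈ ZRest Δ i} :=
    ⟨Δ.card, fun j hj => mem_ZRest_bdd hcons hj⟩
  exact le_csSup hbdd h

lemma Zrank_not_mem_succ {Δ : Finset (Cond At)} (hcons : ConsistentKB Δ)
    {δ : Cond At} : δ ∉ ZRest Δ (Zrank Δ δ + 1) := by
  intro h
  have := le_Zrank hcons h
  omega

lemma Zrank_tolerated {Δ : Finset (Cond At)} (hcons : ConsistentKB Δ)
    {δ : Cond At} (hδ : δ ∈ Δ) : Tolerated (ZRest Δ (Zrank Δ δ)) δ := by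
  have h1 := Zrank_mem hcons hδ
  have h2 := Zrank_not_mem_succ hcons (Δ := Δ) (δ := δ)
  by_contra hc
  exact h2 (by
    show δ ∈ Finset.filter _ _
    rw [Finset.mem_filter]
    exact ⟨h1, fun h => hc h⟩)

lemma satKB_ZRest_iff {Δ : Finset (Cond At)} (hcons : ConsistentKB Δ)
    (ω : At → Bool) (r : ℕ) :
    SatKB ω (ZRest Δ r) ↔ ∀ δ ∈ Δ, Falsifies ω δ → Zrank Δ δ < r := by
  constructor
  · intro h δ hδ hfal
    by_contra hc
    push_neg at hc
    exact h δ (ZRest_antitone Δ hc (Zrank_mem hcons hδ)) hfal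
  · intro h δ hδ hfal
    have h1 := le_Zrank hcons hδ
    have h2 := h δ (ZRest_subset_self Δ r hδ) hfal
    omega

end AuxLemmas2
section AuxLemmas3

open Classical

set_option linter.unusedSectionVars false

variable {At : Type} [DecidableEq At] [Fintype At]

lemma kappaZ_ne_top (Δ : Finset (Cond At)) (ω : At → Bool) : kappaZ Δ ω ≠ ⊤ := by
  rw [kappaZ_def]
  split
  · simp
  · intro h
    rw [show ((((falSet Δ ω).sup (Zrank Δ) : ℕ) : ℕ∞) + 1)
        = (((falSet Δ ω).sup (Zrank Δ) + 1 : ℕ) : ℕ∞) by push_cast; ring] at h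
    exact (WithTop.coe_ne_top) h

lemma maxFal_of_kappaZ {Δ : Finset (Cond At)} {ω : At → Bool} {k : ℕ}
    (h : kappaZ Δ ω = ((k + 1 : ℕ) : ℕ∞)) : maxFal Δ ω = ((k : ℕ) : WithBot ℕ) := by
  have hns : ¬ SatKB ω Δ := by
    intro hs
    rw [kappaZ_eq_zero Δ ω hs] at h
    exact absurd h.symm (by exact_mod_cast Nat.succ_ne_zero k)
  rw [kappaZ_eq_succ Δ ω hns] at h
  have hk : (falSet Δ ω).sup (Zrank Δ) = k := by
    push_cast at h
    have h' := WithTop.add_right_cancel (by simp : (1:ℕ∞) ≠ ⊤) h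
    exact Nat.cast_injective (R := ℕ∞) h'
  rw [maxFal_eq_coe Δ ω hns, hk]

lemma kappaZ_of_maxFal {Δ : Finset (Cond At)} {ω : At → Bool} {k : ℕ}
    (h : maxFal Δ ω = ((k : ℕ) : WithBot ℕ)) : kappaZ Δ ω = ((k + 1 : ℕ) : ℕ∞) := by
  have hns : ¬ SatKB ω Δ := by
    intro hs
    rw [maxFal_eq_bot Δ ω hs] at h
    exact absurd h.symm (by simp [Nat.cast_withBot])
  rw [maxFal_eq_coe Δ ω hns] at h
  have hk : (falSet Δ ω).sup (Zrank Δ) = k := by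
    have := h
    rw [Nat.cast_withBot, Nat.cast_withBot] at this
    exact_mod_cast this
  rw [kappaZ_eq_succ Δ ω hns, hk]
  push_cast
  ring

/-- Descent: if some world has `maxFal = k+1` then some world has `maxFal = k`. -/
lemma maxFal_descent {Δ : Finset (Cond At)} (hcons : ConsistentKB Δ)
    {ω : At → Bool} {k : ℕ} (h : maxFal Δ ω = ((k + 1 : ℕ) : WithBot ℕ)) :
    ∃ ω' : At → Bool, maxFal Δ ω' = ((k : ℕ) : WithBot ℕ) := by
  have hns : ¬ SatKB ω Δ := by
    intro hs
    rw [maxFal_eq_bot Δ ω hs] at h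
    exact absurd h.symm (by simp [Nat.cast_withBot])
  -- the sup is k+1 and is attained
  have hsup : (falSet Δ ω).sup (Zrank Δ) = k + 1 := by
    have := h
    rw [maxFal_eq_coe Δ ω hns, Nat.cast_withBot, Nat.cast_withBot] at this
    exact_mod_cast this
  obtain ⟨δ, hδmem, hδsup⟩ := Finset.exists_mem_eq_sup (falSet Δ ω)
    (falSet_nonempty Δ ω hns) (Zrank Δ)
  have hδΔ : δ ∈ Δ := (Finset.mem_filter.mp hδmem).1
  have hδfal : Falsifies ω δ := (Finset.mem_filter.mp hδmem).2
  have hδrank : Zrank Δ δ = k + 1 := by rw [← hδsup, hsup]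
  -- δ is tolerated by ZRest Δ (k+1)
  have htol : Tolerated (ZRest Δ (k + 1)) δ := by
    have := Zrank_tolerated hcons hδΔ
    rwa [hδrank] at this
  obtain ⟨ω', hver, hsat⟩ := htol
  -- δ ∈ ZRest Δ (k+1), i.e. δ is not tolerated by ZRest Δ k
  have hmem : δ ∈ ZRest Δ (k + 1) := by
    have := Zrank_mem hcons hδΔ
    rwa [hδrank] at this
  have hntol : ¬ Tolerated (ZRest Δ k) δ := by
    have : δ ∈ Finset.filter (fun δ => ¬ Tolerated (ZRest Δ k) δ) (ZRest Δ k) := hmem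
    exact (Finset.mem_filter.mp this).2
  -- hence ω' falsifies some conditional in ZRest Δ k
  have hfals : ∃ δ'' ∈ ZRest Δ k, Falsifies ω' δ'' := by
    by_contra hc
    push_neg at hc
    exact hntol ⟨ω', hver, hc⟩
  obtain ⟨δ'', hδ''mem, hδ''fal⟩ := hfals
  have hδ''Δ : δ'' ∈ Δ := ZRest_subset_self Δ k hδ''mem
  have h1 : k ≤ Zrank Δ δ'' := le_Zrank hcons hδ''mem
  have h2 : Zrank Δ δ'' < k + 1 :=
    (satKB_ZRest_iff hcons ω' (k+1)).mp hsat δ'' hδ''Δ hδ''fal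
  have hδ''rank : Zrank Δ δ'' = k := by omega
  -- maxFal ω' = k
  refine ⟨ω', ?_⟩
  have hns' : ¬ SatKB ω' Δ := by
    intro hs
    exact hs δ'' hδ''Δ hδ''fal
  rw [maxFal_eq_coe Δ ω' hns']
  have hle : (falSet Δ ω').sup (Zrank Δ) ≤ k := by
    refine Finset.sup_le fun δ' hδ' => ?_
    have hΔ' : δ' ∈ Δ := (Finset.mem_filter.mp hδ').1
    have hfal' : Falsifies ω' δ' := (Finset.mem_filter.mp hδ').2
    have := (satKB_ZRest_iff hcons ω' (k+1)).mp hsat δ' hΔ' hfal'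
    omega
  have hge : k ≤ (falSet Δ ω').sup (Zrank Δ) := by
    have : δ'' ∈ falSet Δ ω' := Finset.mem_filter.mpr ⟨hδ''Δ, hδ''fal⟩
    calc k = Zrank Δ δ'' := hδ''rank.symm
    _ ≤ (falSet Δ ω').sup (Zrank Δ) := Finset.le_sup this
  have : (falSet Δ ω').sup (Zrank Δ) = k := le_antisymm hle hge
  rw [this]

/-- From a world of rank `v` we can find worlds of every rank `n ≤ v`. -/
lemma kappaZ_descent {Δ : Finset (Cond At)} (hcons : ConsistentKB Δ) :
    ∀ v n : ℕ, n ≤ v → (∃ ω, kappaZ Δ ω = ((v : ℕ) : ℕ∞)) →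
      ∃ ω, kappaZ Δ ω = ((n : ℕ) : ℕ∞) := by
  intro v
  induction v with
  | zero =>
    intro n hn h
    rwa [Nat.le_zero.mp hn]
  | succ v ih =>
    intro n hn h
    rcases Nat.lt_succ_iff_lt_or_eq.mp (Nat.lt_succ_of_le hn) with h' | h'
    · refine ih n (Nat.lt_succ_iff.mp h') ?_
      -- need a world of rank v
      cases v with
      | zero =>
        obtain ⟨ω, hω⟩ := exists_satKB hcons
        exact ⟨ω, by rw [kappaZ_eq_zero Δ ω hω]; rfl⟩
      | succ m =>
        obtain ⟨ω, hω⟩ := h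
        have hmf : maxFal Δ ω = ((m + 1 : ℕ) : WithBot ℕ) := maxFal_of_kappaZ hω
        obtain ⟨ω', hω'⟩ := maxFal_descent hcons hmf
        exact ⟨ω', kappaZ_of_maxFal hω'⟩
    · rwa [h']

lemma exists_kappaZ_eq {Δ : Finset (Cond At)} (hcons : ConsistentKB Δ)
    (n : ℕ) (h : ∃ ω, ((n : ℕ) : ℕ∞) ≤ kappaZ Δ ω) :
    ∃ ω, kappaZ Δ ω = ((n : ℕ) : ℕ∞) := by
  obtain ⟨ω, hω⟩ := h
  obtain ⟨v, hv⟩ := WithTop.ne_top_iff_exists.mp (kappaZ_ne_top Δ ω)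
  have hv' : kappaZ Δ ω = ((v : ℕ) : ℕ∞) := by exact hv.symm
  refine kappaZ_descent hcons v n ?_ ⟨ω, hv'⟩
  rw [hv'] at hω
  exact_mod_cast hω

lemma unattacked_in {α : Type*} {att : α → α → Prop} {C : Set α} {L : α → Lab}
    (hL : IsCompleteLab att C L) {a : α} (ha : a ∈ C)
    (h : ∀ b ∈ C, att b a → False) : L a = Lab.argIn := by
  obtain ⟨h1, h2, h3⟩ := hL
  cases hLa : L a with
  | argIn => rfl
  | argOut =>
    obtain ⟨b, hb, -, hatt⟩ := h1 a ha hLa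
    exact absurd (h b hb hatt) id
  | argUndec =>
    obtain ⟨-, b, hb, hatt, -⟩ := h3 a ha hLa
    exact absurd (h b hb hatt) id

end AuxLemmas3
section MainAux

open Classical

set_option linter.unusedSectionVars false

variable {At : Type} [DecidableEq At] [Fintype At]

lemma strat_aux {Δ : Finset (Cond At)} (hcons : ConsistentKB Δ) :
    ∀ (C : Set (At → Bool)) (S : (At → Bool) → ℕ∞),
      Stratified Sem.grounded (precZ Δ) C S →
      ∀ n : ℕ, C = {ω | ((n : ℕ) : ℕ∞) ≤ kappaZ Δ ω} →
      ∀ ω ∈ C, ((n : ℕ) : ℕ∞) + S ω = kappaZ Δ ω := by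
  intro C S hS
  induction hS with
  | @ofEmpty C S L hL hin hStop =>
    intro n hC ω hω
    exfalso
    have hω' : ((n : ℕ) : ℕ∞) ≤ kappaZ Δ ω := by rw [hC] at hω; exact hω
    obtain ⟨ω', hω'eq⟩ := exists_kappaZ_eq hcons n ⟨ω, hω'⟩
    have hmem : ω' ∈ C := by rw [hC]; exact le_of_eq hω'eq.symm
    have hLin : L ω' = Lab.argIn := by
      refine unattacked_in hL.1 hmem ?_
      intro b hb hatt
      rw [precZ_iff, hω'eq] at hatt
      rw [hC] at hb
      exact absurd hatt (not_lt.mpr hb)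
    have hmem' : ω' ∈ inSet C L := ⟨hmem, hLin⟩
    rw [hin] at hmem'
    exact hmem'
  | @ofStep C S L S' hL hinne hS' h0 h1 ih =>
    intro n hC ω hω
    have hLc : IsCompleteLab (precZ Δ) C L := hL.1
    obtain ⟨a₀, ha₀⟩ := hinne
    have ha₀C : a₀ ∈ C := ha₀.1
    have hCne : ∃ ω, ((n:ℕ):ℕ∞) ≤ kappaZ Δ ω := ⟨a₀, by rw [hC] at ha₀C; exact ha₀C⟩
    obtain ⟨ω₀, hκω₀⟩ := exists_kappaZ_eq hcons n hCne
    have hω₀C : ω₀ ∈ C := by rw [hC]; exact le_of_eq hκω₀.symm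
    have hinset : inSet C L = {a | kappaZ Δ a = ((n:ℕ):ℕ∞)} := by
      ext a
      constructor
      · rintro ⟨haC, haIn⟩
        have hge : ((n:ℕ):ℕ∞) ≤ kappaZ Δ a := by rw [hC] at haC; exact haC
        show kappaZ Δ a = ((n:ℕ):ℕ∞)
        by_contra hne'
        have hlt : ((n:ℕ):ℕ∞) < kappaZ Δ a := lt_of_le_of_ne hge (fun h => hne' h.symm)
        have hatt : precZ Δ ω₀ a := (precZ_iff Δ ω₀ a).mpr (by rw [hκω₀]; exact hlt)
        have hout : L ω₀ = Lab.argOut := hLc.2.1 a haC haIn ω₀ hω₀C hatt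
        have hin' : L ω₀ = Lab.argIn := by
          refine unattacked_in hLc hω₀C ?_
          intro b hb hatt'
          rw [precZ_iff, hκω₀] at hatt'
          rw [hC] at hb
          exact absurd hatt' (not_lt.mpr hb)
        rw [hout] at hin'
        exact absurd hin' (by simp)
      · intro ha
        have ha' : kappaZ Δ a = ((n:ℕ):ℕ∞) := ha
        have haC : a ∈ C := by rw [hC]; exact le_of_eq ha'.symm
        refine ⟨haC, unattacked_in hLc haC ?_⟩
        intro b hb hatt
        rw [precZ_iff, ha'] at hatt
        rw [hC] at hb
        exact absurd hatt (not_lt.mpr hb)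
    have hntop : ((n:ℕ):ℕ∞) ≠ ⊤ := by exact_mod_cast WithTop.coe_ne_top
    have hC' : C \ inSet C L = {ω | (((n+1 : ℕ)) : ℕ∞) ≤ kappaZ Δ ω} := by
      rw [hinset, hC]
      ext a
      simp only [Set.mem_diff, Set.mem_setOf_eq]
      constructor
      · rintro ⟨hge, hne'⟩
        have hlt : ((n:ℕ):ℕ∞) < kappaZ Δ a := lt_of_le_of_ne hge (fun h => hne' h.symm)
        have h2 : ((n:ℕ):ℕ∞) + 1 ≤ kappaZ Δ a := (ENat.add_one_le_iff hntop).mpr hlt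
        refine le_trans (le_of_eq ?_) h2
        push_cast
        rfl
      · intro h
        have h2 : ((n:ℕ):ℕ∞) + 1 ≤ kappaZ Δ a := by
          refine le_trans (le_of_eq ?_) h
          push_cast
          rfl
        have hlt : ((n:ℕ):ℕ∞) < kappaZ Δ a :=
          lt_of_lt_of_le ((ENat.lt_add_one_iff hntop).mpr (le_refl _)) h2
        exact ⟨hlt.le, fun he => absurd (he ▸ hlt) (lt_irrefl _)⟩
    rcases Classical.em (kappaZ Δ ω = ((n:ℕ):ℕ∞)) with he | he
    · have hωin : ω ∈ inSet C L := by rw [hinset]; exact he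
      rw [h0 ω hωin, add_zero, he]
    · have hωd : ω ∈ C \ inSet C L := ⟨hω, by rw [hinset]; exact he⟩
      have hrec := ih (n+1) hC' ω hωd
      rw [h1 ω hωd]
      calc ((n:ℕ):ℕ∞) + (1 + S' ω) = ((n:ℕ):ℕ∞) + 1 + S' ω := (add_assoc _ 1 _).symm
      _ = (((n+1:ℕ)):ℕ∞) + S' ω := by push_cast; rfl
      _ = kappaZ Δ ω := hrec

end MainAux

/-- For a consistent knowledge base `Δ` over finitely many atoms, the
System Z ranking function `κ^z_Δ` coincides with the grounded-stratified labeling of the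
`≺^Δ_Z`-induced argumentation framework, whose arguments are the interpretations and
where `ω₁` attacks `ω₂` iff `ω₁ ≺^Δ_Z ω₂`. -/
theorem systemZ_eq_grounded_stratified {At : Type} [DecidableEq At] [Fintype At]
    (Δ : Finset (Cond At)) (hcons : ConsistentKB Δ)
    (S : (At → Bool) → ℕ∞)
    (hS : Stratified Sem.grounded (precZ Δ) Set.univ S) :
    ∀ ω : At → Bool, S ω = kappaZ Δ ω := by
  intro ω
  have huniv : (Set.univ : Set (At → Bool)) = {ω | ((0 : ℕ) : ℕ∞) ≤ kappaZ Δ ω} := by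
    ext a
    simp
  have h := strat_aux hcons Set.univ S hS 0 huniv ω (Set.mem_univ ω)
  rw [Nat.cast_zero, zero_add] at h
  exact h
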